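/- Let H₁ and H₂ be subgroups of a group G with H₁ ≲ H₂ (i.e., H₁ ∩ H₂ has finite index in H₁). Then for every normal subgroup H of G, H₁H ≲ H₂H. -/

import Mathlib

theorem stmt2 {G : Type*} [Group G] (H₁ H₂ H : Subgroup G) [H.Normal]
    (h : H₂.relIndex H₁ ≠ 0) : (H₂ ⊔ H).relIndex (H₁ ⊔ H) ≠ 0 := by
  let π := QuotientGroup.mk' H
  have hker : π.ker = H := QuotientGroup.ker_mk' H
  have hcomap : (H₂.map π).comap π = H₂ ⊔ H := by
    rw [Subgroup.comap_map_eq, hker]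
  have hmap : (H₁ ⊔ H).map π = H₁.map π := by
    have : H.map π = ⊥ := (Subgroup.map_eq_bot_iff _).2 hker.ge
    rw [Subgroup.map_sup, this, sup_bot_eq]
  have key : (H₂ ⊔ H).relIndex (H₁ ⊔ H) = (H₂ ⊔ H).relIndex H₁ := by
    rw [← hcomap, Subgroup.relIndex_comap, hmap, ← Subgroup.relIndex_comap, hcomap]
  rw [key]
  intro h0
  exact h (Nat.eq_zero_of_zero_dvd (h0 ▸ Subgroup.relIndex_dvd_of_le_left H₁ le_sup_left))
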